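/- Let r > 0 and k ∈ (0, 1/√2), and let D : C_r → ℝ^d satisfy |D(φ) − D(ψ)| ≤ k‖φ − ψ‖_r for all φ, ψ ∈ C_r and D(0) = 0. Let t ≥ 0 and let x : ℝ → ℝ^d be continuous on [0,t] with initial segment ξ := x_0 satisfying ‖ξ‖_r < ∞. Then (1 − 2k²) · sup_{0 ≤ s ≤ t}|x(s)|² ≤ 2k²‖ξ‖²_r + 2 · sup_{0 ≤ s ≤ t}|x(s) − D(x_s)|². -/
import Mathlib


/-- The segment `x_t(θ) = x(t + θ)`. -/
def seg {d : ℕ} (x : ℝ → EuclideanSpace ℝ (Fin d)) (t : ℝ) :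
    ℝ → EuclideanSpace ℝ (Fin d) := fun θ => x (t + θ)

/-- The weighted norm `‖φ‖_r = sup_{θ ≤ 0} e^{rθ} |φ(θ)|` (as a real supremum). -/
noncomputable def rnorm {d : ℕ} (r : ℝ) (φ : ℝ → EuclideanSpace ℝ (Fin d)) : ℝ :=
  sSup ((fun θ => Real.exp (r * θ) * ‖φ θ‖) '' Set.Iic 0)

/-- Membership in `C_r`: continuity on `(−∞,0]` and finiteness of `‖·‖_r`. -/
def memCr {d : ℕ} (r : ℝ) (φ : ℝ → EuclideanSpace ℝ (Fin d)) : Prop :=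
  ContinuousOn φ (Set.Iic 0) ∧
    BddAbove ((fun θ => Real.exp (r * θ) * ‖φ θ‖) '' Set.Iic 0)

/-- let `r > 0`, `k ∈ (0, 1/√2)`, and let `D` be `k`-Lipschitz on `C_r` with
`D(0) = 0`. If `x` is continuous on `[0,t]` and its initial segment `ξ := x_0` lies in `C_r`,
then `(1 − 2k²) sup_{0≤s≤t}|x(s)|² ≤ 2k²‖ξ‖²_r + 2 sup_{0≤s≤t}|x(s) − D(x_s)|²`. -/
theorem neutral_L2_pathwise_bound {d : ℕ} (r k : ℝ) (hr : 0 < r)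
    (hk0 : 0 < k) (hk : k < 1 / Real.sqrt 2)
    (D : (ℝ → EuclideanSpace ℝ (Fin d)) → EuclideanSpace ℝ (Fin d))
    (hLip : ∀ φ ψ : ℝ → EuclideanSpace ℝ (Fin d), memCr r φ → memCr r ψ →
      ‖D φ - D ψ‖ ≤ k * rnorm r (φ - ψ))
    (hD0 : D 0 = 0)
    (t : ℝ) (ht : 0 ≤ t) (x : ℝ → EuclideanSpace ℝ (Fin d))
    (hx : ContinuousOn x (Set.Icc 0 t))
    (hξc : ContinuousOn x (Set.Iic 0))
    (hξb : BddAbove ((fun θ => Real.exp (r * θ) * ‖seg x 0 θ‖) '' Set.Iic 0)) :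
    (1 - 2 * k ^ 2) * sSup ((fun s => ‖x s‖ ^ 2) '' Set.Icc 0 t)
      ≤ 2 * k ^ 2 * (rnorm r (seg x 0)) ^ 2
        + 2 * sSup ((fun s => ‖x s - D (seg x s)‖ ^ 2) '' Set.Icc 0 t) := by
  -- abbreviations
  set N := rnorm r (seg x 0) with hN
  -- N is an upper bound for the ξ-terms, and N ≥ 0
  have hNub : ∀ θ ≤ (0:ℝ), Real.exp (r * θ) * ‖x θ‖ ≤ N := by
    intro θ hθ
    have : Real.exp (r * θ) * ‖seg x 0 θ‖ ≤ N :=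
      le_csSup hξb ⟨θ, hθ, rfl⟩
    simpa [seg] using this
  have hN0 : 0 ≤ N := le_trans (by positivity) (hNub 0 le_rfl)
  -- maximizer of ‖x‖ on [0,t]
  obtain ⟨s₀, hs₀, hmax⟩ :=
    (isCompact_Icc (a := (0:ℝ)) (b := t)).exists_isMaxOn
      (Set.nonempty_Icc.2 ht) (hx.norm)
  set S := ‖x s₀‖ with hSdef
  have hS0 : 0 ≤ S := norm_nonneg _
  have hSub : ∀ s ∈ Set.Icc (0:ℝ) t, ‖x s‖ ≤ S := fun s hs => hmax hs
  -- pointwise bound for the weighted terms of any segment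
  have hterm : ∀ s ∈ Set.Icc (0:ℝ) t, ∀ θ ≤ (0:ℝ),
      Real.exp (r * θ) * ‖x (s + θ)‖ ≤ max N S := by
    intro s hs θ hθ
    rcases le_total (s + θ) 0 with h | h
    · refine le_trans (le_trans ?_ (hNub (s + θ) h)) (le_max_left _ _)
      have he : Real.exp (r * θ) ≤ Real.exp (r * (s + θ)) := by
        apply Real.exp_le_exp.2
        nlinarith [hs.1]
      exact mul_le_mul_of_nonneg_right he (norm_nonneg _)
    · refine le_trans ?_ (le_max_right _ _)
      have he : Real.exp (r * θ) ≤ 1 := by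
        apply Real.exp_le_one_iff.2
        nlinarith
      have hx' : ‖x (s + θ)‖ ≤ S := hSub _ ⟨h, by nlinarith [hs.2]⟩
      calc Real.exp (r * θ) * ‖x (s + θ)‖ ≤ 1 * S := by
            apply mul_le_mul he hx' (norm_nonneg _) zero_le_one
        _ = S := one_mul _
  -- the segment seg x s belongs to C_r for s ∈ [0,t]
  have hxt : ContinuousOn x (Set.Iic t) := by
    intro u hu
    have h1 : ContinuousWithinAt x (Set.Iic 0) u := by
      rcases le_or_gt u 0 with h | h
      · exact hξc u h
      · exact continuousWithinAt_of_notMem_closure (by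
          rwa [isClosed_Iic.closure_eq, Set.mem_Iic, not_le])
    have h2 : ContinuousWithinAt x (Set.Icc 0 t) u := by
      rcases le_or_gt 0 u with h | h
      · exact hx u ⟨h, hu⟩
      · exact continuousWithinAt_of_notMem_closure (by
          rw [isClosed_Icc.closure_eq]
          exact fun hc => absurd hc.1 (not_le.2 h))
    exact (h1.union h2).mono (fun v hv => by
      rcases le_total v 0 with h | h
      · exact Or.inl h
      · exact Or.inr ⟨h, hv⟩)
  have hmem : ∀ s ∈ Set.Icc (0:ℝ) t, memCr r (seg x s) := by
    intro s hs
    constructor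
    · have : ContinuousOn (fun θ : ℝ => s + θ) (Set.Iic 0) :=
        (continuous_const.add continuous_id).continuousOn
      refine hxt.comp this ?_
      intro θ hθ
      simp only [Set.mem_Iic] at hθ ⊢
      nlinarith [hs.2]
    · refine ⟨max N S, ?_⟩
      rintro v ⟨θ, hθ, rfl⟩
      exact hterm s hs θ hθ
  have hmem0 : memCr r (0 : ℝ → EuclideanSpace ℝ (Fin d)) := by
    refine ⟨continuousOn_const, ⟨0, ?_⟩⟩
    rintro v ⟨θ, hθ, rfl⟩
    simp
  -- rnorm of segments is bounded by max N S
  have hrn : ∀ s ∈ Set.Icc (0:ℝ) t, rnorm r (seg x s) ≤ max N S := by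
    intro s hs
    apply Real.sSup_le
    · rintro v ⟨θ, hθ, rfl⟩
      exact hterm s hs θ hθ
    · exact le_trans hN0 (le_max_left _ _)
  -- bound on ‖D (seg x s)‖
  have hDb : ∀ s ∈ Set.Icc (0:ℝ) t, ‖D (seg x s)‖ ≤ k * max N S := by
    intro s hs
    have := hLip (seg x s) 0 (hmem s hs) hmem0
    rw [hD0, sub_zero, sub_zero] at this
    exact le_trans this (mul_le_mul_of_nonneg_left (hrn s hs) hk0.le)
  -- B : sup of the squared differences, with bddAbove
  set B := sSup ((fun s => ‖x s - D (seg x s)‖ ^ 2) '' Set.Icc 0 t) with hB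
  have hBdd : BddAbove ((fun s => ‖x s - D (seg x s)‖ ^ 2) '' Set.Icc 0 t) := by
    refine ⟨(S + k * max N S) ^ 2, ?_⟩
    rintro v ⟨s, hs, rfl⟩
    have h1 : ‖x s - D (seg x s)‖ ≤ S + k * max N S :=
      le_trans (norm_sub_le _ _) (add_le_add (hSub s hs) (hDb s hs))
    exact pow_le_pow_left₀ (norm_nonneg _) h1 2
  have hC2 : ‖x s₀ - D (seg x s₀)‖ ^ 2 ≤ B :=
    le_csSup hBdd ⟨s₀, hs₀, rfl⟩
  -- key scalar inequality at the maximizer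
  set C := ‖x s₀ - D (seg x s₀)‖ with hCdef
  have hC0 : 0 ≤ C := norm_nonneg _
  set m := rnorm r (seg x s₀) with hm
  have hm0 : 0 ≤ m := by
    refine le_trans (by positivity : (0:ℝ) ≤ Real.exp (r * 0) * ‖seg x s₀ 0‖) ?_
    exact le_csSup (hmem s₀ hs₀).2 ⟨0, Set.self_mem_Iic, rfl⟩
  have hmNS : m ≤ max N S := hrn s₀ hs₀
  have hm2 : m ^ 2 ≤ N ^ 2 + S ^ 2 := by
    rcases le_total N S with h | h
    · have : max N S = S := max_eq_right h
      nlinarith [this ▸ hmNS]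
    · have : max N S = N := max_eq_left h
      nlinarith [this ▸ hmNS]
  have hSkey : S ≤ k * m + C := by
    have hD' : ‖D (seg x s₀)‖ ≤ k * m := by
      have := hLip (seg x s₀) 0 (hmem s₀ hs₀) hmem0
      rwa [hD0, sub_zero, sub_zero] at this
    calc S = ‖x s₀‖ := rfl
      _ ≤ ‖D (seg x s₀)‖ + ‖x s₀ - D (seg x s₀)‖ := by
          have := norm_add_le (D (seg x s₀)) (x s₀ - D (seg x s₀))
          simpa [add_sub_cancel] using this
      _ ≤ k * m + C := add_le_add hD' le_rfl
  -- conclude: S² ≤ 2k²N² + 2k²S² + 2B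
  have hfinal : (1 - 2 * k ^ 2) * S ^ 2 ≤ 2 * k ^ 2 * N ^ 2 + 2 * B := by
    nlinarith [sq_nonneg (k * m - C), mul_le_mul_of_nonneg_left hm2 (sq_nonneg k),
      mul_nonneg hk0.le hm0, sq_nonneg S]
  -- the LHS sup is at most S²
  have hcoef : 0 ≤ 1 - 2 * k ^ 2 := by
    have h2 : Real.sqrt 2 * k < 1 := by
      rw [lt_div_iff₀ (Real.sqrt_pos.2 two_pos)] at hk
      linarith [hk]
    nlinarith [Real.sq_sqrt (by norm_num : (0:ℝ) ≤ 2), Real.sqrt_nonneg 2,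
      mul_pos (Real.sqrt_pos.2 two_pos) hk0]
  have hsup : sSup ((fun s => ‖x s‖ ^ 2) '' Set.Icc 0 t) ≤ S ^ 2 := by
    apply Real.sSup_le
    · rintro v ⟨s, hs, rfl⟩
      exact pow_le_pow_left₀ (norm_nonneg _) (hSub s hs) 2
    · positivity
  calc (1 - 2 * k ^ 2) * sSup ((fun s => ‖x s‖ ^ 2) '' Set.Icc 0 t)
      ≤ (1 - 2 * k ^ 2) * S ^ 2 := mul_le_mul_of_nonneg_left hsup hcoef
    _ ≤ 2 * k ^ 2 * N ^ 2 + 2 * B := hfinal
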